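/- Let G = (V,E) be a finite loopless directed graph such that (u,v) ∈ E implies (v,u) ∈ E, and let 𝒜 = 𝒜(G) be the associated Boolean matrix indexed by V ∪ E. If U ⊆ V is an independent set of G, then the square submatrix of 𝒜 whose rows and columns are indexed by U ∪ E is sign-nonsingular. Consequently, the determinantal rank of 𝒜(G) is at least |U| + |E|. -/

import Mathlib

/-- Entries of a Boolean matrix `A` at the positions in `S` form a fooling set:
`A p.1 q.2 = A q.1 p.2 = 1` holds exactly when the positions coincide. -/
def IsFoolingSet {α β : Type*} (A : Matrix α β Bool) (S : Finset (α × β)) : Prop :=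
  ∀ p ∈ S, ∀ q ∈ S, (A p.1 q.2 = true ∧ A q.1 p.2 = true) ↔ p = q

/-- The fooling set number of a Boolean matrix: the largest cardinality of a fooling set. -/
noncomputable def foolingSetNumber {α β : Type*} (A : Matrix α β Bool) : ℕ :=
  sSup {n | ∃ S : Finset (α × β), IsFoolingSet A S ∧ S.card = n}

/-- A square Boolean matrix is sign-nonsingular if some permutation `τ` picks out all-one
entries, and every permutation doing so has the same sign as `τ`. -/
def SignNonsingular {ι : Type*} [Fintype ι] [DecidableEq ι] (A : Matrix ι ι Bool) : Prop :=
  ∃ τ : Equiv.Perm ι, (∀ i, A i (τ i) = true) ∧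
    ∀ σ : Equiv.Perm ι, (∀ i, A i (σ i) = true) → Equiv.Perm.sign σ = Equiv.Perm.sign τ

/-- The determinantal rank of a Boolean matrix: the size of its largest
sign-nonsingular square submatrix. -/
noncomputable def detRank {α β : Type*} (A : Matrix α β Bool) : ℕ :=
  sSup {k | ∃ r : Fin k → α, ∃ c : Fin k → β,
    Function.Injective r ∧ Function.Injective c ∧ SignNonsingular (A.submatrix r c)}

lemma snsEquiv {ι κ : Type*} [Fintype ι] [DecidableEq ι] [Fintype κ] [DecidableEq κ]
    (A : Matrix ι ι Bool) (e : κ ≃ ι) (h : SignNonsingular A) :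
    SignNonsingular (A.submatrix e e) := by
  obtain ⟨τ, hτ, hmax⟩ := h
  refine ⟨e.symm.permCongr τ, fun i => ?_, fun σ hσ => ?_⟩
  · simpa [Matrix.submatrix_apply, Equiv.permCongr_apply] using hτ (e i)
  · have h1 : ∀ x, A x ((e.permCongr σ) x) = true := by
      intro x
      simpa [Equiv.permCongr_apply] using hσ (e.symm x)
    have h2 := hmax _ h1
    rw [Equiv.Perm.sign_permCongr] at h2
    rw [h2, Equiv.Perm.sign_permCongr]

/-- The Boolean matrix `𝒜(G)` of a symmetric loopless directed graph `G = (V, E)`,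
with rows and columns indexed by `V ⊕ E`. -/
def adjMat {V : Type*} [DecidableEq V] (E : Finset (V × V)) :
    Matrix (V ⊕ {e : V × V // e ∈ E}) (V ⊕ {e : V × V // e ∈ E}) Bool :=
  fun x y =>
    match x, y with
    | Sum.inl u, Sum.inl v => decide (u = v ∨ (u, v) ∈ E)
    | Sum.inl u, Sum.inr e => decide (e.val.1 = u)
    | Sum.inr e, Sum.inl v => decide (e.val.2 = v)
    | Sum.inr e, Sum.inr f => decide (e = f)

/-- If `U` is an independent set of a symmetric loopless directed graph `G = (V, E)`,
then the square submatrix of `𝒜(G)` with rows and columns indexed by `U ∪ E` is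
sign-nonsingular; consequently the determinantal rank of `𝒜(G)` is at least `|U| + |E|`. -/
theorem signNonsingular_submatrix_of_indep {V : Type*} [Fintype V] [DecidableEq V]
    (E : Finset (V × V)) (hloop : ∀ p ∈ E, p.1 ≠ p.2)
    (hsymm : ∀ u v : V, (u, v) ∈ E → (v, u) ∈ E)
    (U : Finset V) (hU : ∀ u ∈ U, ∀ v ∈ U, (u, v) ∉ E) :
    SignNonsingular ((adjMat E).submatrix
        (Sum.map (Subtype.val : {u : V // u ∈ U} → V) (id : {e : V × V // e ∈ E} → _))
        (Sum.map (Subtype.val : {u : V // u ∈ U} → V) (id : {e : V × V // e ∈ E} → _))) ∧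
      U.card + E.card ≤ detRank (adjMat E) := by
  set B := ((adjMat E).submatrix
      (Sum.map (Subtype.val : {u : V // u ∈ U} → V) (id : {e : V × V // e ∈ E} → _))
      (Sum.map (Subtype.val : {u : V // u ∈ U} → V) (id : {e : V × V // e ∈ E} → _)))
    with hB
  have hsns : SignNonsingular B := by
    refine ⟨1, fun i => ?_, fun σ hσ => ?_⟩
    · cases i with
      | inl u => simp [hB, adjMat, Matrix.submatrix_apply]
      | inr e => simp [hB, adjMat, Matrix.submatrix_apply]
    · have hvert : ∀ u, σ (Sum.inl u) = Sum.inl u := by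
        intro u
        rcases h : σ (Sum.inl u) with v | e
        · have := hσ (Sum.inl u)
          rw [h] at this
          simp only [hB, adjMat, Matrix.submatrix_apply, Sum.map_inl, decide_eq_true_eq] at this
          rcases this with h1 | h1
          · exact congrArg Sum.inl (Subtype.ext h1).symm
          · exact absurd h1 (hU u.1 u.2 v.1 v.2)
        · exfalso
          have h1 := hσ (Sum.inl u)
          rw [h] at h1
          simp only [hB, adjMat, Matrix.submatrix_apply, Sum.map_inl, Sum.map_inr,
            id_eq, decide_eq_true_eq] at h1
          -- h1 : e.val.1 = u.val
          rcases h2 : σ (Sum.inr e) with v | f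
          · have h3 := hσ (Sum.inr e)
            rw [h2] at h3
            simp only [hB, adjMat, Matrix.submatrix_apply, Sum.map_inl, Sum.map_inr,
              id_eq, decide_eq_true_eq] at h3
            -- h3 : e.val.2 = v.val
            have : (u.val, v.val) ∈ E := by
              have : e.val = (u.val, v.val) := by
                rw [← h1, ← h3]
              exact this ▸ e.2
            exact hU u.1 u.2 v.1 v.2 this
          · have h3 := hσ (Sum.inr e)
            rw [h2] at h3
            simp only [hB, adjMat, Matrix.submatrix_apply, Sum.map_inr,
              id_eq, decide_eq_true_eq] at h3
            subst h3
            exact absurd (σ.injective (h.trans h2.symm)) (by simp)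
      have hedge : ∀ e, σ (Sum.inr e) = Sum.inr e := by
        intro e
        rcases h : σ (Sum.inr e) with v | f
        · exact absurd (σ.injective ((hvert v).trans h.symm)) (by simp)
        · have h3 := hσ (Sum.inr e)
          rw [h] at h3
          simp only [hB, adjMat, Matrix.submatrix_apply, Sum.map_inr,
            id_eq, decide_eq_true_eq] at h3
          subst h3
          rfl
      have : σ = 1 := by
        ext x
        cases x with
        | inl u => simpa using hvert u
        | inr e => simpa using hedge e
      rw [this]
  refine ⟨hsns, ?_⟩
  have hcard : Fintype.card ({u : V // u ∈ U} ⊕ {e : V × V // e ∈ E}) = U.card + E.card := by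
    simp [Fintype.card_sum, Fintype.card_coe]
  set k := U.card + E.card with hk
  have e : Fin k ≃ ({u : V // u ∈ U} ⊕ {e : V × V // e ∈ E}) :=
    (Fintype.equivFinOfCardEq hcard).symm
  have hinjmap : Function.Injective
      (Sum.map (Subtype.val : {u : V // u ∈ U} → V) (id : {e : V × V // e ∈ E} → _)) :=
    Function.Injective.sumMap Subtype.val_injective Function.injective_id
  have hmem : k ∈ {k | ∃ r : Fin k → (V ⊕ {e : V × V // e ∈ E}),
      ∃ c : Fin k → (V ⊕ {e : V × V // e ∈ E}),
      Function.Injective r ∧ Function.Injective c ∧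
      SignNonsingular ((adjMat E).submatrix r c)} := by
    refine ⟨_ ∘ e, _ ∘ e, hinjmap.comp e.injective, hinjmap.comp e.injective, ?_⟩
    have : (adjMat E).submatrix (Sum.map Subtype.val id ∘ e) (Sum.map Subtype.val id ∘ e)
        = B.submatrix e e := by
      rw [hB, Matrix.submatrix_submatrix]
    rw [this]
    exact snsEquiv B e hsns
  refine le_csSup ⟨Fintype.card (V ⊕ {e : V × V // e ∈ E}), ?_⟩ hmem
  rintro n ⟨r, c, hr, hc, hsub⟩
  simpa using Fintype.card_le_of_injective r hr
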